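/- arXiv:1208.2870 — 7 statements merged into one kernel-verified Lean document; each statement's English description precedes it below -/
import Mathlib

section
/- Let A₁, A₂, Y₁, Y₂ be real-valued square-integrable random variables on a probability space such that the pair (A₁, A₂) is independent of the pair (Y₁, Y₂), with E[A₁] = E[A₂] = μ_A and E[Y₁] = E[Y₂] = μ_Y, and write c_A = Cov(A₁, A₂) and c_Y = Cov(Y₁, Y₂). Then Cov(A₁·Y₁, A₂·Y₂) = (c_A + μ_A²)·c_Y + c_A·μ_Y². (This is Lemma 1 of the paper: for stationary independent processes A(t) and Y(t) and W(t) = A(t)Y(t), the autocovariance satisfies c_W(τ) = (c_A(τ) + μ_A²)c_Y(τ) + c_A(τ)μ_Y².) -/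
open MeasureTheory ProbabilityTheory

/-- Lemma 1 of the paper: for square-integrable `A₁, A₂, Y₁, Y₂` with the pair
`(A₁, A₂)` independent of the pair `(Y₁, Y₂)`, equal means `μ_A` for the `A`'s and
`μ_Y` for the `Y`'s, and covariances `c_A = Cov(A₁, A₂)`, `c_Y = Cov(Y₁, Y₂)`, the
covariance of the products satisfies
`Cov(A₁Y₁, A₂Y₂) = (c_A + μ_A²)c_Y + c_A μ_Y²`. -/
theorem sampled_covariance_decomposition
    {Ω : Type*} [MeasurableSpace Ω] (μ : Measure Ω) [IsProbabilityMeasure μ]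
    (A₁ A₂ Y₁ Y₂ : Ω → ℝ)
    (hA₁ : MemLp A₁ 2 μ) (hA₂ : MemLp A₂ 2 μ)
    (hY₁ : MemLp Y₁ 2 μ) (hY₂ : MemLp Y₂ 2 μ)
    (hindep : IndepFun (fun ω => (A₁ ω, A₂ ω)) (fun ω => (Y₁ ω, Y₂ ω)) μ)
    (μA μY cA cY : ℝ)
    (hmA₁ : ∫ ω, A₁ ω ∂μ = μA) (hmA₂ : ∫ ω, A₂ ω ∂μ = μA)
    (hmY₁ : ∫ ω, Y₁ ω ∂μ = μY) (hmY₂ : ∫ ω, Y₂ ω ∂μ = μY)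
    (hcA : (∫ ω, A₁ ω * A₂ ω ∂μ) - (∫ ω, A₁ ω ∂μ) * (∫ ω, A₂ ω ∂μ) = cA)
    (hcY : (∫ ω, Y₁ ω * Y₂ ω ∂μ) - (∫ ω, Y₁ ω ∂μ) * (∫ ω, Y₂ ω ∂μ) = cY) :
    (∫ ω, (A₁ ω * Y₁ ω) * (A₂ ω * Y₂ ω) ∂μ)
      - (∫ ω, A₁ ω * Y₁ ω ∂μ) * (∫ ω, A₂ ω * Y₂ ω ∂μ)
      = (cA + μA ^ 2) * cY + cA * μY ^ 2 := by
  have h1 : IndepFun A₁ Y₁ μ := hindep.comp measurable_fst measurable_fst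
  have h2 : IndepFun A₂ Y₂ μ := hindep.comp measurable_snd measurable_snd
  have h3 : IndepFun (fun ω => A₁ ω * A₂ ω) (fun ω => Y₁ ω * Y₂ ω) μ :=
    hindep.comp (measurable_fst.mul measurable_snd) (measurable_fst.mul measurable_snd)
  have e1 : ∫ ω, A₁ ω * Y₁ ω ∂μ = (∫ ω, A₁ ω ∂μ) * (∫ ω, Y₁ ω ∂μ) :=
    h1.integral_fun_mul_eq_mul_integral hA₁.aestronglyMeasurable hY₁.aestronglyMeasurable
  have e2 : ∫ ω, A₂ ω * Y₂ ω ∂μ = (∫ ω, A₂ ω ∂μ) * (∫ ω, Y₂ ω ∂μ) :=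
    h2.integral_fun_mul_eq_mul_integral hA₂.aestronglyMeasurable hY₂.aestronglyMeasurable
  have e3 : ∫ ω, (A₁ ω * A₂ ω) * (Y₁ ω * Y₂ ω) ∂μ
      = (∫ ω, A₁ ω * A₂ ω ∂μ) * (∫ ω, Y₁ ω * Y₂ ω ∂μ) :=
    h3.integral_fun_mul_eq_mul_integral (hA₁.aestronglyMeasurable.mul hA₂.aestronglyMeasurable)
      (hY₁.aestronglyMeasurable.mul hY₂.aestronglyMeasurable)
  have e4 : ∫ ω, (A₁ ω * Y₁ ω) * (A₂ ω * Y₂ ω) ∂μ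
      = ∫ ω, (A₁ ω * A₂ ω) * (Y₁ ω * Y₂ ω) ∂μ := by
    congr 1; ext ω; ring
  rw [e4, e3, e1, e2, hmA₁, hmA₂, hmY₁, hmY₂]
  have hAA : ∫ ω, A₁ ω * A₂ ω ∂μ = cA + μA * μA := by
    rw [← hcA, hmA₁, hmA₂]; ring
  have hYY : ∫ ω, Y₁ ω * Y₂ ω ∂μ = cY + μY * μY := by
    rw [← hcY, hmY₁, hmY₂]; ring
  rw [hAA, hYY]; ring
end

section
/- For all reals β > 0 and τ > 0, the series Σ_{n=1}^{∞} β^{4n} τ^{4n−1} e^{−βτ} / (4n−1)! converges and equals (β/4)·(1 − e^{−2βτ} − 2·sin(βτ)·e^{−βτ}). (This is the renewal density computation for Gamma sampling with shape α = 4, using the series identity Σ_{n≥1} x^{4n}/(4n−1)! = x·(sinh x − sin x)/2; it yields E[A(t)A(t+τ)] = μ_A²(1 − e^{−2βτ} − 2 sin(βτ) e^{−βτ}) with μ_A = β/4.) -/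
open Real

open NormedSpace in
open scoped Nat in
private lemma sinh_series (x : ℝ) : HasSum (fun n : ℕ => x ^ (2 * n + 1) / (2 * n + 1)!)
    ((Real.exp x - Real.exp (-x)) / 2) := by
  rw [Real.exp_eq_exp_ℝ]
  have h := ((expSeries_div_hasSum_exp x).sub (expSeries_div_hasSum_exp (-x))).div_const 2
  replace h := (Nat.divModEquiv 2).symm.hasSum_iff.mpr h
  dsimp [Function.comp_def, Nat.divModEquiv] at h
  simp_rw [← mul_comm 2 _] at h
  refine h.prod_fiberwise fun m => ?_
  dsimp only
  convert hasSum_fintype (_ : Fin 2 → ℝ) using 1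
  · rfl
  rw [Fin.sum_univ_two]
  simp [Fin.val_zero, Fin.val_one, add_zero, pow_succ, pow_mul, neg_sq, sub_self, zero_div,
    neg_mul, sub_neg_eq_add, ← two_mul, mul_comm (2:ℝ), mul_div_assoc]
  ring

open scoped Nat in
private lemma key_series (x : ℝ) : HasSum (fun m : ℕ => x ^ (4 * m + 3) / (4 * m + 3)!)
    (((Real.exp x - Real.exp (-x)) / 2 - Real.sin x) / 2) := by
  have h := ((sinh_series x).sub (Real.hasSum_sin x)).div_const 2
  replace h := (Nat.divModEquiv 2).symm.hasSum_iff.mpr h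
  dsimp [Function.comp_def, Nat.divModEquiv] at h
  simp_rw [← mul_comm 2 _] at h
  refine h.prod_fiberwise fun m => ?_
  dsimp only
  convert hasSum_fintype (_ : Fin 2 → ℝ) using 2
  · rfl
  · rw [Fin.sum_univ_two]
    simp only [Fin.val_zero, Fin.val_one, add_zero]
    rw [pow_add, pow_mul, pow_mul]
    norm_num
    rw [show 2 * (2 * m + 1) + 1 = 4 * m + 3 by ring]
    ring_nf
    rw [Even.neg_one_pow ⟨m, by ring⟩]
    ring

/-- Renewal density for Gamma sampling with shape `α = 4`: for `β, τ > 0`,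
`∑_{n=1}^∞ β^{4n} τ^{4n−1} e^{−βτ} / (4n−1)! = (β/4)(1 − e^{−2βτ} − 2 sin(βτ) e^{−βτ})`. -/
theorem gamma4_renewal_density (β τ : ℝ) (hβ : 0 < β) (hτ : 0 < τ) :
    HasSum
      (fun n : ℕ =>
        β ^ (4 * (n + 1)) * τ ^ (4 * (n + 1) - 1) * Real.exp (-β * τ)
          / (Nat.factorial (4 * (n + 1) - 1)))
      ((β / 4) * (1 - Real.exp (-2 * β * τ)
          - 2 * Real.sin (β * τ) * Real.exp (-β * τ))) := by
  have h := (key_series (β * τ)).mul_left (β * Real.exp (-(β * τ)))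
  have hfun : (fun n : ℕ =>
        β ^ (4 * (n + 1)) * τ ^ (4 * (n + 1) - 1) * Real.exp (-β * τ)
          / (Nat.factorial (4 * (n + 1) - 1)))
      = fun m : ℕ => β * Real.exp (-(β * τ)) *
          ((β * τ) ^ (4 * m + 3) / (Nat.factorial (4 * m + 3))) := by
    funext m
    have h1 : 4 * (m + 1) - 1 = 4 * m + 3 := by omega
    have h2 : 4 * (m + 1) = (4 * m + 3) + 1 := by omega
    rw [h1, h2, mul_pow, pow_succ, neg_mul]
    ring
  have hval : (β / 4) * (1 - Real.exp (-2 * β * τ)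
          - 2 * Real.sin (β * τ) * Real.exp (-β * τ))
      = β * Real.exp (-(β * τ)) *
        (((Real.exp (β * τ) - Real.exp (-(β * τ))) / 2 - Real.sin (β * τ)) / 2) := by
    have e1 : Real.exp (-(β * τ)) = (Real.exp (β * τ))⁻¹ := Real.exp_neg _
    have e2 : Real.exp (-2 * β * τ) = ((Real.exp (β * τ))⁻¹) ^ 2 := by
      rw [← e1, ← Real.exp_nat_mul]; norm_num; ring_nf
    have e3 : Real.exp (-β * τ) = (Real.exp (β * τ))⁻¹ := by rw [← e1]; ring_nf
    have hE : Real.exp (β * τ) ≠ 0 := (Real.exp_pos _).ne'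
    rw [e1, e2, e3]
    field_simp
    ring
  rw [hfun, hval]
  exact h
end

section
/- Let b > 0 and let f : ℝ → ℝ be the uniform density f(x) = 1/b for 0 ≤ x ≤ b and f(x) = 0 otherwise. Denote by f^{(*n)} the n-fold convolution of f with itself (f^{(*1)} = f). Then for every τ with 0 ≤ τ ≤ b, f^{(*n)}(τ) = τ^{n−1}/((n−1)!·bⁿ) for every n ≥ 1, and consequently Σ_{n=1}^{∞} f^{(*n)}(τ) = (1/b)·e^{τ/b}. (This is the renewal density computation for uniform sampling, giving the autocorrelation density E[A(t)A(t+τ)] = (1/2)·μ_A²·e^{τ/b} for 0 ≤ τ ≤ b, with μ_A = 2/b.) -/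
open MeasureTheory

/-- The `n`-fold self-convolution of a density `f : ℝ → ℝ`:
`iterSelfConv f 1 = f` and `iterSelfConv f (n+1) t = ∫ s, f s · iterSelfConv f n (t − s) ds`.
For `n = 0` we set it to `0` by convention (it is only used for `n ≥ 1`). -/
noncomputable def iterSelfConv (f : ℝ → ℝ) : ℕ → ℝ → ℝ
  | 0 => fun _ => 0
  | 1 => f
  | (n + 2) => fun t => ∫ s : ℝ, f s * iterSelfConv f (n + 1) (t - s)

lemma uniform_iterSelfConv (b : ℝ) (hb : 0 < b)
    (f : ℝ → ℝ) (hf : ∀ x, f x = if 0 ≤ x ∧ x ≤ b then 1 / b else 0) :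
    ∀ n : ℕ, ∀ t : ℝ,
      (t < 0 → iterSelfConv f (n + 1) t = 0) ∧
      (0 ≤ t → t ≤ b →
        iterSelfConv f (n + 1) t = t ^ n / ((Nat.factorial n) * b ^ (n + 1))) := by
  intro n
  induction n with
  | zero =>
    intro t
    constructor
    · intro ht
      simp only [iterSelfConv, hf t]
      rw [if_neg]; rintro ⟨h1, _⟩; linarith
    · intro h0 h1
      simp only [iterSelfConv, hf t]
      rw [if_pos ⟨h0, h1⟩]
      simp
  | succ n ih =>
    intro t
    have hdef : iterSelfConv f (n + 2) t
        = ∫ s : ℝ, f s * iterSelfConv f (n + 1) (t - s) := rfl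
    constructor
    · intro ht
      rw [hdef]
      have : (fun s : ℝ => f s * iterSelfConv f (n + 1) (t - s)) = fun _ => (0 : ℝ) := by
        funext s
        by_cases hs : 0 ≤ s ∧ s ≤ b
        · have : t - s < 0 := by linarith [hs.1]
          rw [(ih (t - s)).1 this, mul_zero]
        · rw [hf s, if_neg hs, zero_mul]
      rw [this, integral_zero]
    · intro h0 h1
      rw [hdef]
      have hkey : (fun s : ℝ => f s * iterSelfConv f (n + 1) (t - s))
          = Set.indicator (Set.Icc 0 t)
              (fun s => (t - s) ^ n / ((Nat.factorial n) * b ^ (n + 2))) := by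
        funext s
        by_cases hs : s ∈ Set.Icc 0 t
        · rw [Set.indicator_of_mem hs]
          obtain ⟨hs0, hst⟩ := hs
          rw [hf s, if_pos ⟨hs0, le_trans hst h1⟩,
            (ih (t - s)).2 (by linarith) (by linarith)]
          rw [pow_succ b (n + 1)]
          field_simp
        · rw [Set.indicator_of_notMem hs]
          simp only [Set.mem_Icc, not_and_or, not_le] at hs
          rcases hs with hs | hs
          · rw [hf s, if_neg (by push_neg; intro h; linarith), zero_mul]
          · rw [(ih (t - s)).1 (by linarith), mul_zero]
      rw [hkey, integral_indicator measurableSet_Icc,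
        integral_Icc_eq_integral_Ioc, ← intervalIntegral.integral_of_le h0]
      have : ∫ s in (0:ℝ)..t, (t - s) ^ n / ((Nat.factorial n) * b ^ (n + 2))
          = (∫ s in (0:ℝ)..t, (t - s) ^ n) / ((Nat.factorial n) * b ^ (n + 2)) :=
        intervalIntegral.integral_div _ _
      rw [this, intervalIntegral.integral_comp_sub_left (fun x => x ^ n) t]
      simp only [sub_zero, sub_self]
      rw [integral_pow]
      simp only [ne_eq, Nat.cast_add, Nat.cast_one, zero_pow, Nat.factorial_succ]
      have hfac : (0:ℝ) < Nat.factorial n := by positivity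
      have hn1 : (0:ℝ) < (n:ℝ) + 1 := by positivity
      rw [zero_pow (Nat.succ_ne_zero n)]
      push_cast
      field_simp
      ring

/-- Renewal density for uniform sampling: let `f` be the uniform density on `[0, b]`.
Then for `0 ≤ τ ≤ b` the `n`-fold self-convolution satisfies
`f^{(*n)}(τ) = τ^{n−1} / ((n−1)! bⁿ)` for all `n ≥ 1`, and consequently
`∑_{n=1}^∞ f^{(*n)}(τ) = (1/b) e^{τ/b}`. -/
theorem uniform_renewal_density (b : ℝ) (hb : 0 < b)
    (f : ℝ → ℝ) (hf : ∀ x, f x = if 0 ≤ x ∧ x ≤ b then 1 / b else 0)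
    (τ : ℝ) (hτ0 : 0 ≤ τ) (hτb : τ ≤ b) :
    (∀ n : ℕ, 1 ≤ n →
      iterSelfConv f n τ = τ ^ (n - 1) / ((Nat.factorial (n - 1)) * b ^ n)) ∧
    HasSum (fun n : ℕ => iterSelfConv f (n + 1) τ) ((1 / b) * Real.exp (τ / b)) := by
  have key := uniform_iterSelfConv b hb f hf
  constructor
  · intro n hn
    obtain ⟨m, rfl⟩ := Nat.exists_eq_add_of_le hn
    rw [add_comm 1 m]
    simpa using (key m τ).2 hτ0 hτb
  · have heq : (fun n : ℕ => iterSelfConv f (n + 1) τ)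
        = fun n : ℕ => (1 / b) * ((τ / b) ^ n / (Nat.factorial n)) := by
      funext n
      rw [(key n τ).2 hτ0 hτb, div_pow, pow_succ b n]
      field_simp
    rw [heq]
    have h := NormedSpace.expSeries_div_hasSum_exp (τ / b)
    rw [← Real.exp_eq_exp_ℝ] at h
    exact h.mul_left (1 / b)
end

section
/- Let M ≥ 1 be an integer. Let A₁, ..., A_M and Y₁, ..., Y_M be square-integrable real random variables such that the vector (A₁, ..., A_M) is independent of (Y₁, ..., Y_M), and each sequence is covariance stationary: E[A_t] = μ_A, E[Y_t] = μ_Y for all t, Cov(A_s, A_t) = c_A(|t−s|), Cov(Y_s, Y_t) = c_Y(|t−s|), with σ_A² = c_A(0) and σ_Y² = c_Y(0). Set W_t = A_t·Y_t and let A^{(M)}, Y^{(M)}, W^{(M)} denote the block averages (1/M)·Σ_{t=1}^{M} of the respective sequences. Then Var(W^{(M)}) = μ_Y²·Var(A^{(M)}) + μ_A²·Var(Y^{(M)}) + (1/M)·σ_Y²·σ_A² + (2/M²)·Σ_{τ=1}^{M−1} (M−τ)·c_Y(τ)·c_A(τ). (This is Lemma 2 of the paper.) -/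
open MeasureTheory ProbabilityTheory Finset

private lemma agg_half_half : (1:ENNReal) / 1 = 1 / 2 + 1 / 2 := by
  have h2 : (2:ENNReal)/2 = 1 := ENNReal.div_self (by norm_num) (by norm_num)
  rw [ENNReal.div_add_div_same, one_add_one_eq_two, h2, div_one]

private lemma agg_integrable_mul {Ω : Type*} [MeasurableSpace Ω] {μ : Measure Ω}
    (f g : Ω → ℝ) (hf : MemLp f 2 μ) (hg : MemLp g 2 μ) :
    Integrable (fun ω => f ω * g ω) μ := by
  have h := hg.smul (φ := f) (r := 1) hf
  rw [memLp_one_iff_integrable] at h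
  exact h

private lemma agg_sum_sum_dist (f : ℕ → ℝ) : ∀ (M : ℕ),
    ∑ s ∈ Icc 1 M, ∑ t ∈ Icc 1 M, f (Nat.dist s t)
      = M * f 0 + 2 * ∑ τ ∈ Icc 1 (M-1), ((M:ℝ) - τ) * f τ := by
  intro M
  induction M with
  | zero => simp
  | succ M ih =>
    have hins : Icc 1 (M+1) = insert (M+1) (Icc 1 M) :=
      (Finset.insert_Icc_right_eq_Icc_add_one (by omega)).symm
    have hnm : (M+1) ∉ Icc 1 M := by simp
    have hrefl : ∀ g : ℕ → ℝ, ∑ t ∈ Icc 1 M, g (M+1-t) = ∑ τ ∈ Icc 1 M, g τ := by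
      intro g
      refine Finset.sum_nbij' (fun t => M+1-t) (fun t => M+1-t) ?_ ?_ ?_ ?_ ?_ <;>
        intro a ha <;> simp at ha ⊢ <;> omega
    have hd1 : ∀ t ∈ Icc 1 M, Nat.dist (M+1) t = M+1-t := by
      intro t ht; simp at ht; simp [Nat.dist]; omega
    have hd2 : ∀ s ∈ Icc 1 M, Nat.dist s (M+1) = M+1-s := by
      intro s hs; simp at hs; simp [Nat.dist]; omega
    rw [hins, Finset.sum_insert hnm, Finset.sum_insert hnm]
    rw [Finset.sum_congr rfl (fun t ht => by rw [hd1 t ht] :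
        ∀ t ∈ Icc 1 M, f (Nat.dist (M+1) t) = f (M+1-t)), Finset.sum_congr rfl
      (fun s hs => by rw [Finset.sum_insert hnm, hd2 s hs] :
        ∀ s ∈ Icc 1 M, ∑ t ∈ insert (M+1) (Icc 1 M), f (Nat.dist s t)
          = f (M+1-s) + ∑ t ∈ Icc 1 M, f (Nat.dist s t))]
    rw [Finset.sum_add_distrib, ih, hrefl]
    simp only [Nat.dist_self, Nat.add_sub_cancel]
    rcases Nat.eq_zero_or_pos M with h0 | hpos
    · subst h0; simp
    · obtain ⟨m, hMm⟩ := Nat.exists_eq_add_of_le hpos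
      have hm1 : M - 1 = m := by omega
      have hins2 : Icc 1 M = insert M (Icc 1 m) := by
        rw [show M = m + 1 by omega]
        exact (Finset.insert_Icc_right_eq_Icc_add_one (by omega)).symm
      have hnm2 : M ∉ Icc 1 m := by simp; omega
      rw [hm1, hins2]
      simp only [Finset.sum_insert hnm2]
      have conv2 : ∑ x ∈ Icc 1 m, (((M:ℝ) + 1) - x) * f x
          = ∑ x ∈ Icc 1 m, (((M:ℝ) - x) * f x + f x) :=
        Finset.sum_congr rfl (fun τ _ => by ring)
      have conv3 : ∑ x ∈ Icc 1 m, (((M+1:ℕ):ℝ) - x) * f x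
          = ∑ x ∈ Icc 1 m, (((M:ℝ) + 1) - x) * f x :=
        Finset.sum_congr rfl (fun τ _ => by push_cast; ring)
      rw [conv3, conv2, Finset.sum_add_distrib]
      push_cast
      ring

private lemma agg_variance_avg {Ω : Type*} [MeasurableSpace Ω] (μ : Measure Ω)
    [IsProbabilityMeasure μ] (c : ℝ) (I : Finset ℕ) (f : ℕ → Ω → ℝ)
    (hmem : ∀ t ∈ I, MemLp (f t) 2 μ)
    (hint : ∀ s ∈ I, ∀ t ∈ I, Integrable (fun ω => f s ω * f t ω) μ) :
    variance (fun ω => c * ∑ t ∈ I, f t ω) μ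
      = c ^ 2 * ∑ s ∈ I, ∑ t ∈ I, (∫ ω, f s ω * f t ω ∂μ)
        - (c * ∑ t ∈ I, ∫ ω, f t ω ∂μ) ^ 2 := by
  have hg : MemLp (fun ω => c * ∑ t ∈ I, f t ω) 2 μ :=
    (memLp_finset_sum I hmem).const_mul c
  rw [variance_eq_sub hg]
  congr 1
  · calc ∫ x, ((fun ω => c * ∑ t ∈ I, f t ω) ^ 2) x ∂μ
        = ∫ x, c ^ 2 * ∑ s ∈ I, ∑ t ∈ I, f s x * f t x ∂μ := by
          refine integral_congr_ae (Filter.Eventually.of_forall fun x => ?_)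
          simp only [Pi.pow_apply]
          rw [mul_pow, sq (∑ t ∈ I, f t x), Finset.sum_mul_sum]
      _ = c ^ 2 * ∑ s ∈ I, ∑ t ∈ I, (∫ ω, f s ω * f t ω ∂μ) := by
          rw [integral_const_mul]
          congr 1
          rw [integral_finset_sum I
            (fun s hs => integrable_finset_sum I (fun t ht => hint s hs t ht))]
          exact Finset.sum_congr rfl fun s hs =>
            integral_finset_sum I (fun t ht => hint s hs t ht)
  · rw [integral_const_mul,
      integral_finset_sum I (fun t ht => (hmem t ht).integrable one_le_two)]

/-- Lemma 2 of the paper: for independent covariance-stationary sequences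
`A₁, …, A_M` (means `μ_A`, autocovariance `c_A`, variance `σ_A² = c_A 0`) and
`Y₁, …, Y_M` (means `μ_Y`, autocovariance `c_Y`, variance `σ_Y² = c_Y 0`), with
`W_t = A_t Y_t`, the block averages satisfy
`Var(W^{(M)}) = μ_Y² Var(A^{(M)}) + μ_A² Var(Y^{(M)}) + σ_Y²σ_A²/M
  + (2/M²) ∑_{τ=1}^{M−1} (M−τ) c_Y(τ) c_A(τ)`. -/
theorem aggregate_variance_of_sampled_process
    {Ω : Type*} [MeasurableSpace Ω] (μ : Measure Ω) [IsProbabilityMeasure μ]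
    (M : ℕ) (hM : 1 ≤ M)
    (A Y : ℕ → Ω → ℝ)
    (hA : ∀ t ∈ Finset.Icc 1 M, MemLp (A t) 2 μ)
    (hY : ∀ t ∈ Finset.Icc 1 M, MemLp (Y t) 2 μ)
    (hindep : IndepFun (fun ω (i : Fin M) => A (i.val + 1) ω)
      (fun ω (i : Fin M) => Y (i.val + 1) ω) μ)
    (μA μY : ℝ) (cA cY : ℕ → ℝ)
    (hmA : ∀ t ∈ Finset.Icc 1 M, ∫ ω, A t ω ∂μ = μA)
    (hmY : ∀ t ∈ Finset.Icc 1 M, ∫ ω, Y t ω ∂μ = μY)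
    (hstatA : ∀ s ∈ Finset.Icc 1 M, ∀ t ∈ Finset.Icc 1 M,
      (∫ ω, A s ω * A t ω ∂μ) - (∫ ω, A s ω ∂μ) * (∫ ω, A t ω ∂μ)
        = cA (Nat.dist s t))
    (hstatY : ∀ s ∈ Finset.Icc 1 M, ∀ t ∈ Finset.Icc 1 M,
      (∫ ω, Y s ω * Y t ω ∂μ) - (∫ ω, Y s ω ∂μ) * (∫ ω, Y t ω ∂μ)
        = cY (Nat.dist s t)) :
    variance (fun ω => (M : ℝ)⁻¹ * ∑ t ∈ Finset.Icc 1 M, A t ω * Y t ω) μ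
      = μY ^ 2 * variance (fun ω => (M : ℝ)⁻¹ * ∑ t ∈ Finset.Icc 1 M, A t ω) μ
        + μA ^ 2 * variance (fun ω => (M : ℝ)⁻¹ * ∑ t ∈ Finset.Icc 1 M, Y t ω) μ
        + (1 / (M : ℝ)) * cY 0 * cA 0
        + (2 / (M : ℝ) ^ 2) * ∑ τ ∈ Finset.Icc 1 (M - 1), ((M : ℝ) - τ) * (cY τ * cA τ) := by
  have hMne : (M : ℝ) ≠ 0 := Nat.cast_ne_zero.mpr (by omega)
  set I := Finset.Icc 1 M with hI
  -- independence facts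
  have key : ∀ (φ : (Fin M → ℝ) → ℝ), Measurable φ →
      IndepFun (fun ω => φ (fun i => A (i.val + 1) ω))
        (fun ω => φ (fun i => Y (i.val + 1) ω)) μ := fun φ hφ => hindep.comp hφ hφ
  have hindst : ∀ s ∈ I, ∀ t ∈ I,
      IndepFun (fun ω => A s ω * A t ω) (fun ω => Y s ω * Y t ω) μ := by
    intro s hs t ht
    simp only [hI, Finset.mem_Icc] at hs ht
    have h1 : s - 1 < M := by omega
    have h2 : t - 1 < M := by omega
    have hs1 : s - 1 + 1 = s := by omega
    have ht1 : t - 1 + 1 = t := by omega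
    have := key (fun v => v ⟨s-1, h1⟩ * v ⟨t-1, h2⟩)
      ((measurable_pi_apply _).mul (measurable_pi_apply _))
    simpa only [hs1, ht1] using this
  have hindt : ∀ t ∈ I, IndepFun (A t) (Y t) μ := by
    intro t ht
    simp only [hI, Finset.mem_Icc] at ht
    have h2 : t - 1 < M := by omega
    have ht1 : t - 1 + 1 = t := by omega
    have := key (fun v => v ⟨t-1, h2⟩) (measurable_pi_apply _)
    simpa only [ht1] using this
  have hindsq : ∀ t ∈ I, IndepFun (fun ω => A t ω ^ 2) (fun ω => Y t ω ^ 2) μ := by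
    intro t ht
    simp only [hI, Finset.mem_Icc] at ht
    have h2 : t - 1 < M := by omega
    have ht1 : t - 1 + 1 = t := by omega
    have := key (fun v => v ⟨t-1, h2⟩ ^ 2) ((measurable_pi_apply _).pow_const 2)
    simpa only [ht1] using this
  -- integrability facts
  have hAint : ∀ s ∈ I, ∀ t ∈ I, Integrable (fun ω => A s ω * A t ω) μ :=
    fun s hs t ht => agg_integrable_mul _ _ (hA s hs) (hA t ht)
  have hYint : ∀ s ∈ I, ∀ t ∈ I, Integrable (fun ω => Y s ω * Y t ω) μ :=
    fun s hs t ht => agg_integrable_mul _ _ (hY s hs) (hY t ht)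
  -- second-moment identities for A and Y
  have haa : ∀ s ∈ I, ∀ t ∈ I,
      (∫ ω, A s ω * A t ω ∂μ) = cA (Nat.dist s t) + μA * μA := by
    intro s hs t ht
    have h := hstatA s hs t ht
    rw [hmA s hs, hmA t ht] at h
    linarith
  have hyy : ∀ s ∈ I, ∀ t ∈ I,
      (∫ ω, Y s ω * Y t ω ∂μ) = cY (Nat.dist s t) + μY * μY := by
    intro s hs t ht
    have h := hstatY s hs t ht
    rw [hmY s hs, hmY t ht] at h
    linarith
  -- the sampled process W t = A t * Y t
  have hWeq : ∀ s ∈ I, ∀ t ∈ I, (fun ω => (A s ω * Y s ω) * (A t ω * Y t ω))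
      = (fun ω => A s ω * A t ω) * (fun ω => Y s ω * Y t ω) := by
    intro s _ t _
    funext ω
    simp only [Pi.mul_apply]
    ring
  have hWint : ∀ s ∈ I, ∀ t ∈ I,
      Integrable (fun ω => (A s ω * Y s ω) * (A t ω * Y t ω)) μ := by
    intro s hs t ht
    rw [hWeq s hs t ht]
    exact (hindst s hs t ht).integrable_mul (hAint s hs t ht) (hYint s hs t ht)
  have hWW : ∀ s ∈ I, ∀ t ∈ I,
      (∫ ω, (A s ω * Y s ω) * (A t ω * Y t ω) ∂μ)
        = (cA (Nat.dist s t) + μA * μA) * (cY (Nat.dist s t) + μY * μY) := by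
    intro s hs t ht
    have e : (∫ ω, (A s ω * Y s ω) * (A t ω * Y t ω) ∂μ)
        = (∫ ω, A s ω * A t ω ∂μ) * (∫ ω, Y s ω * Y t ω ∂μ) := by
      calc (∫ ω, (A s ω * Y s ω) * (A t ω * Y t ω) ∂μ)
          = ∫ ω, ((fun ω => A s ω * A t ω) * (fun ω => Y s ω * Y t ω)) ω ∂μ := by
            rw [← hWeq s hs t ht]
        _ = (∫ ω, A s ω * A t ω ∂μ) * (∫ ω, Y s ω * Y t ω ∂μ) :=
            (hindst s hs t ht).integral_mul_eq_mul_integral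
              ((hA s hs).aestronglyMeasurable.mul (hA t ht).aestronglyMeasurable)
              ((hY s hs).aestronglyMeasurable.mul (hY t ht).aestronglyMeasurable)
    rw [e, haa s hs t ht, hyy s hs t ht]
  have hWmean : ∀ t ∈ I, (∫ ω, A t ω * Y t ω ∂μ) = μA * μY := by
    intro t ht
    have h := (hindt t ht).integral_mul_eq_mul_integral (hA t ht).aestronglyMeasurable
      (hY t ht).aestronglyMeasurable
    rw [hmA t ht, hmY t ht] at h
    exact h
  have hWmem : ∀ t ∈ I, MemLp (fun ω => A t ω * Y t ω) 2 μ := by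
    intro t ht
    have hsm : AEStronglyMeasurable (fun ω => A t ω * Y t ω) μ :=
      (hA t ht).aestronglyMeasurable.mul (hY t ht).aestronglyMeasurable
    rw [memLp_two_iff_integrable_sq hsm]
    have heq : (fun ω => (A t ω * Y t ω) ^ 2)
        = (fun ω => A t ω ^ 2) * (fun ω => Y t ω ^ 2) := by
      funext ω; simp only [Pi.mul_apply]; ring
    rw [heq]
    exact (hindsq t ht).integrable_mul (hA t ht).integrable_sq (hY t ht).integrable_sq
  -- apply the variance formula three times
  have hVW := agg_variance_avg μ ((M : ℝ)⁻¹) I (fun t ω => A t ω * Y t ω) hWmem hWint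
  have hVA := agg_variance_avg μ ((M : ℝ)⁻¹) I A hA hAint
  have hVY := agg_variance_avg μ ((M : ℝ)⁻¹) I Y hY hYint
  rw [hVW, hVA, hVY]
  -- evaluate the sums of integrals
  have cardI : (I.card : ℝ) = (M : ℝ) := by
    simp [hI, Nat.card_Icc]
  have eWW : ∑ s ∈ I, ∑ t ∈ I, (∫ ω, (A s ω * Y s ω) * (A t ω * Y t ω) ∂μ)
      = ∑ s ∈ I, ∑ t ∈ I,
          ((cA (Nat.dist s t) + μA * μA) * (cY (Nat.dist s t) + μY * μY)) :=
    Finset.sum_congr rfl fun s hs => Finset.sum_congr rfl fun t ht => hWW s hs t ht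
  have eAA : ∑ s ∈ I, ∑ t ∈ I, (∫ ω, A s ω * A t ω ∂μ)
      = ∑ s ∈ I, ∑ t ∈ I, (cA (Nat.dist s t) + μA * μA) :=
    Finset.sum_congr rfl fun s hs => Finset.sum_congr rfl fun t ht => haa s hs t ht
  have eYY : ∑ s ∈ I, ∑ t ∈ I, (∫ ω, Y s ω * Y t ω ∂μ)
      = ∑ s ∈ I, ∑ t ∈ I, (cY (Nat.dist s t) + μY * μY) :=
    Finset.sum_congr rfl fun s hs => Finset.sum_congr rfl fun t ht => hyy s hs t ht
  have eWm : ∑ t ∈ I, (∫ ω, A t ω * Y t ω ∂μ) = (M : ℝ) * (μA * μY) := by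
    rw [Finset.sum_congr rfl hWmean, Finset.sum_const, nsmul_eq_mul, cardI]
  have eAm : ∑ t ∈ I, (∫ ω, A t ω ∂μ) = (M : ℝ) * μA := by
    rw [Finset.sum_congr rfl hmA, Finset.sum_const, nsmul_eq_mul, cardI]
  have eYm : ∑ t ∈ I, (∫ ω, Y t ω ∂μ) = (M : ℝ) * μY := by
    rw [Finset.sum_congr rfl hmY, Finset.sum_const, nsmul_eq_mul, cardI]
  rw [eWW, eAA, eYY, eWm, eAm, eYm]
  -- expand the double sums
  have expand : ∀ (a b : ℝ),
      ∑ s ∈ I, ∑ t ∈ I, ((cA (Nat.dist s t) + a) * (cY (Nat.dist s t) + b))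
        = (∑ s ∈ I, ∑ t ∈ I, (cY (Nat.dist s t) * cA (Nat.dist s t)))
          + b * (∑ s ∈ I, ∑ t ∈ I, cA (Nat.dist s t))
          + a * (∑ s ∈ I, ∑ t ∈ I, cY (Nat.dist s t))
          + (M : ℝ) ^ 2 * (a * b) := by
    intro a b
    have e1 : ∀ s ∈ I, ∑ t ∈ I, ((cA (Nat.dist s t) + a) * (cY (Nat.dist s t) + b))
        = (∑ t ∈ I, cY (Nat.dist s t) * cA (Nat.dist s t))
          + b * (∑ t ∈ I, cA (Nat.dist s t))
          + a * (∑ t ∈ I, cY (Nat.dist s t)) + (M : ℝ) * (a * b) := by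
      intro s _
      rw [Finset.mul_sum, Finset.mul_sum, ← Finset.sum_add_distrib,
        ← Finset.sum_add_distrib]
      rw [show (M : ℝ) * (a * b) = ∑ _t ∈ I, a * b by
        rw [Finset.sum_const, nsmul_eq_mul, cardI]]
      rw [← Finset.sum_add_distrib]
      exact Finset.sum_congr rfl fun t _ => by ring
    rw [Finset.sum_congr rfl e1, Finset.sum_add_distrib, Finset.sum_add_distrib,
      Finset.sum_add_distrib, ← Finset.mul_sum, ← Finset.mul_sum,
      Finset.sum_const, nsmul_eq_mul, cardI]
    ring
  have shift : ∀ (u : ℕ → ℝ) (a : ℝ), ∑ s ∈ I, ∑ t ∈ I, (u (Nat.dist s t) + a)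
      = (∑ s ∈ I, ∑ t ∈ I, u (Nat.dist s t)) + (M : ℝ) ^ 2 * a := by
    intro u a
    rw [Finset.sum_congr rfl (fun s _ => Finset.sum_add_distrib),
      Finset.sum_add_distrib, Finset.sum_const, Finset.sum_const,
      nsmul_eq_mul, nsmul_eq_mul, cardI]
    ring
  rw [expand (μA * μA) (μY * μY), shift cA (μA * μA), shift cY (μY * μY)]
  have hdd := agg_sum_sum_dist (fun τ => cY τ * cA τ) M
  rw [hI] at *
  rw [hdd]
  field_simp
  ring
end

section
/- Under the hypotheses of the paper's Lemma 2 (M ≥ 1; (A₁,...,A_M) independent of (Y₁,...,Y_M); both covariance stationary with means μ_A, μ_Y, variances σ_A², σ_Y², autocovariances c_A, c_Y; W_t = A_t Y_t), assume additionally that μ_A ≠ 0 and that c_A(τ) = 0 for all 1 ≤ τ ≤ M−1 (as holds for Bernoulli sampling with geometric inter-sample times). Then the aggregate variance of the traffic process can be recovered from the observations as Var(Y^{(M)}) = (1/μ_A²)·Var(W^{(M)}) − (1/μ_A²)·(μ_Y²·Var(A^{(M)}) + (1/M)·σ_Y²·σ_A²). -/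
open MeasureTheory ProbabilityTheory Finset

/-- Product of two `L²` functions is integrable. -/
lemma l2_mul_integrable {Ω : Type*} [MeasurableSpace Ω] {μ : Measure Ω} {f g : Ω → ℝ}
    (hf : MemLp f 2 μ) (hg : MemLp g 2 μ) : Integrable (fun ω => f ω * g ω) μ := by
  have h12 : (1 : ENNReal) / 1 = 1 / 2 + 1 / 2 := by
    rw [ENNReal.div_add_div_same, one_div_one, one_add_one_eq_two]
    exact (ENNReal.div_self (a := 2) (by norm_num) (by norm_num)).symm
  have h : MemLp (g • f) 1 μ := hf.smul hg
  rw [memLp_one_iff_integrable] at h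
  simpa [Pi.smul_apply, smul_eq_mul, mul_comm, Pi.mul_def] using h

/-- Variance of a block average as a double sum of covariances. -/
lemma var_avg_sum {Ω : Type*} [MeasurableSpace Ω] (μ : Measure Ω) [IsProbabilityMeasure μ]
    (M : ℕ) (X : ℕ → Ω → ℝ)
    (hX : ∀ t ∈ Finset.Icc 1 M, MemLp (X t) 2 μ)
    (hmul : ∀ s ∈ Finset.Icc 1 M, ∀ t ∈ Finset.Icc 1 M,
      Integrable (fun ω => X s ω * X t ω) μ) :
    variance (fun ω => (M : ℝ)⁻¹ * ∑ t ∈ Finset.Icc 1 M, X t ω) μ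
      = (M : ℝ)⁻¹ ^ 2 * ∑ s ∈ Finset.Icc 1 M, ∑ t ∈ Finset.Icc 1 M,
          ((∫ ω, X s ω * X t ω ∂μ) - (∫ ω, X s ω ∂μ) * (∫ ω, X t ω ∂μ)) := by
  have hS : MemLp (fun ω => ∑ t ∈ Finset.Icc 1 M, X t ω) 2 μ :=
    memLp_finset_sum _ hX
  have hcS : MemLp (fun ω => (M : ℝ)⁻¹ * ∑ t ∈ Finset.Icc 1 M, X t ω) 2 μ :=
    hS.const_mul _
  rw [variance_eq_sub hcS]
  have hsq : ∀ ω : Ω, (∑ t ∈ Finset.Icc 1 M, X t ω) ^ 2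
      = ∑ s ∈ Finset.Icc 1 M, ∑ t ∈ Finset.Icc 1 M, X s ω * X t ω := by
    intro ω
    rw [sq, Finset.sum_mul_sum]
  have h1 : (∫ ω, ((fun ω => (M : ℝ)⁻¹ * ∑ t ∈ Finset.Icc 1 M, X t ω) ^ 2) ω ∂μ)
      = (M : ℝ)⁻¹ ^ 2 * ∑ s ∈ Finset.Icc 1 M, ∑ t ∈ Finset.Icc 1 M,
          ∫ ω, X s ω * X t ω ∂μ := by
    simp only [Pi.pow_apply, mul_pow]
    rw [integral_const_mul]
    congr 1
    simp_rw [hsq]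
    rw [integral_finset_sum _ (fun s hs =>
      integrable_finset_sum _ (fun t ht => hmul s hs t ht))]
    exact Finset.sum_congr rfl fun s hs =>
      integral_finset_sum _ (fun t ht => hmul s hs t ht)
  have h2 : (∫ ω, (M : ℝ)⁻¹ * ∑ t ∈ Finset.Icc 1 M, X t ω ∂μ)
      = (M : ℝ)⁻¹ * ∑ t ∈ Finset.Icc 1 M, ∫ ω, X t ω ∂μ := by
    rw [integral_const_mul]
    congr 1
    exact integral_finset_sum _ (fun t ht => (hX t ht).integrable one_le_two)
  rw [h1, h2]
  have h3 : (∑ t ∈ Finset.Icc 1 M, ∫ ω, X t ω ∂μ) * (∑ t ∈ Finset.Icc 1 M, ∫ ω, X t ω ∂μ)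
      = ∑ s ∈ Finset.Icc 1 M, ∑ t ∈ Finset.Icc 1 M,
          (∫ ω, X s ω ∂μ) * (∫ ω, X t ω ∂μ) := Finset.sum_mul_sum _ _ _ _
  simp only [Finset.sum_sub_distrib]
  rw [mul_pow, sq (∑ t ∈ Finset.Icc 1 M, ∫ ω, X t ω ∂μ), h3]
  ring

/-- Aggregate-variance reconstruction under Bernoulli (geometric) sampling:
under the hypotheses of Lemma 2, if additionally `μ_A ≠ 0` and `c_A(τ) = 0` for
`1 ≤ τ ≤ M−1`, then
`Var(Y^{(M)}) = Var(W^{(M)})/μ_A² − (μ_Y² Var(A^{(M)}) + σ_Y²σ_A²/M)/μ_A²`. -/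
theorem aggregate_variance_reconstruction
    {Ω : Type*} [MeasurableSpace Ω] (μ : Measure Ω) [IsProbabilityMeasure μ]
    (M : ℕ) (hM : 1 ≤ M)
    (A Y : ℕ → Ω → ℝ)
    (hA : ∀ t ∈ Finset.Icc 1 M, MemLp (A t) 2 μ)
    (hY : ∀ t ∈ Finset.Icc 1 M, MemLp (Y t) 2 μ)
    (hindep : IndepFun (fun ω (i : Fin M) => A (i.val + 1) ω)
      (fun ω (i : Fin M) => Y (i.val + 1) ω) μ)
    (μA μY : ℝ) (cA cY : ℕ → ℝ)
    (hmA : ∀ t ∈ Finset.Icc 1 M, ∫ ω, A t ω ∂μ = μA)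
    (hmY : ∀ t ∈ Finset.Icc 1 M, ∫ ω, Y t ω ∂μ = μY)
    (hstatA : ∀ s ∈ Finset.Icc 1 M, ∀ t ∈ Finset.Icc 1 M,
      (∫ ω, A s ω * A t ω ∂μ) - (∫ ω, A s ω ∂μ) * (∫ ω, A t ω ∂μ)
        = cA (Nat.dist s t))
    (hstatY : ∀ s ∈ Finset.Icc 1 M, ∀ t ∈ Finset.Icc 1 M,
      (∫ ω, Y s ω * Y t ω ∂μ) - (∫ ω, Y s ω ∂μ) * (∫ ω, Y t ω ∂μ)
        = cY (Nat.dist s t))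
    (hμA : μA ≠ 0)
    (hcA0 : ∀ τ : ℕ, 1 ≤ τ → τ ≤ M - 1 → cA τ = 0) :
    variance (fun ω => (M : ℝ)⁻¹ * ∑ t ∈ Finset.Icc 1 M, Y t ω) μ
      = (1 / μA ^ 2)
          * variance (fun ω => (M : ℝ)⁻¹ * ∑ t ∈ Finset.Icc 1 M, A t ω * Y t ω) μ
        - (1 / μA ^ 2)
          * (μY ^ 2 * variance (fun ω => (M : ℝ)⁻¹ * ∑ t ∈ Finset.Icc 1 M, A t ω) μ
              + (1 / (M : ℝ)) * cY 0 * cA 0) := by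
  have hMR : (M : ℝ) ≠ 0 := Nat.cast_ne_zero.mpr (by omega)
  -- independence of pairs of products
  have hpair : ∀ s ∈ Finset.Icc 1 M, ∀ t ∈ Finset.Icc 1 M,
      IndepFun (fun ω => A s ω * A t ω) (fun ω => Y s ω * Y t ω) μ := by
    intro s hs t ht
    simp only [Finset.mem_Icc] at hs ht
    have es : s - 1 + 1 = s := by omega
    have et : t - 1 + 1 = t := by omega
    have hφ : Measurable (fun v : Fin M → ℝ => v ⟨s - 1, by omega⟩ * v ⟨t - 1, by omega⟩) :=
      (measurable_pi_apply _).mul (measurable_pi_apply _)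
    have h := hindep.comp hφ hφ
    have eA : ((fun v : Fin M → ℝ => v ⟨s - 1, by omega⟩ * v ⟨t - 1, by omega⟩)
        ∘ (fun ω (i : Fin M) => A (i.val + 1) ω)) = fun ω => A s ω * A t ω := by
      funext ω; simp [Function.comp, es, et]
    have eY : ((fun v : Fin M → ℝ => v ⟨s - 1, by omega⟩ * v ⟨t - 1, by omega⟩)
        ∘ (fun ω (i : Fin M) => Y (i.val + 1) ω)) = fun ω => Y s ω * Y t ω := by
      funext ω; simp [Function.comp, es, et]
    rwa [eA, eY] at h
  have hsingle : ∀ t ∈ Finset.Icc 1 M, IndepFun (A t) (Y t) μ := by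
    intro t ht
    simp only [Finset.mem_Icc] at ht
    have et : t - 1 + 1 = t := by omega
    have hφ : Measurable (fun v : Fin M → ℝ => v ⟨t - 1, by omega⟩) := measurable_pi_apply _
    have h := hindep.comp hφ hφ
    have eA : ((fun v : Fin M → ℝ => v ⟨t - 1, by omega⟩)
        ∘ (fun ω (i : Fin M) => A (i.val + 1) ω)) = A t := by
      funext ω; simp [Function.comp, et]
    have eY : ((fun v : Fin M → ℝ => v ⟨t - 1, by omega⟩)
        ∘ (fun ω (i : Fin M) => Y (i.val + 1) ω)) = Y t := by
      funext ω; simp [Function.comp, et]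
    rwa [eA, eY] at h
  have hsq : ∀ t ∈ Finset.Icc 1 M, IndepFun (fun ω => A t ω ^ 2) (fun ω => Y t ω ^ 2) μ := by
    intro t ht
    exact (hsingle t ht).comp (measurable_id.pow_const 2) (measurable_id.pow_const 2)
  -- W is in L²
  have hW2 : ∀ t ∈ Finset.Icc 1 M, MemLp (fun ω => A t ω * Y t ω) 2 μ := by
    intro t ht
    have hm : AEStronglyMeasurable (fun ω => A t ω * Y t ω) μ :=
      (hA t ht).1.mul (hY t ht).1
    rw [memLp_two_iff_integrable_sq hm]
    have : Integrable (fun ω => A t ω ^ 2 * Y t ω ^ 2) μ :=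
      (hsq t ht).integrable_mul (hA t ht).integrable_sq (hY t ht).integrable_sq
    simpa [mul_pow] using this
  -- integrability of all products we'll need
  have hAmul : ∀ s ∈ Finset.Icc 1 M, ∀ t ∈ Finset.Icc 1 M,
      Integrable (fun ω => A s ω * A t ω) μ :=
    fun s hs t ht => l2_mul_integrable (hA s hs) (hA t ht)
  have hYmul : ∀ s ∈ Finset.Icc 1 M, ∀ t ∈ Finset.Icc 1 M,
      Integrable (fun ω => Y s ω * Y t ω) μ :=
    fun s hs t ht => l2_mul_integrable (hY s hs) (hY t ht)
  have hWmul : ∀ s ∈ Finset.Icc 1 M, ∀ t ∈ Finset.Icc 1 M,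
      Integrable (fun ω => (A s ω * Y s ω) * (A t ω * Y t ω)) μ :=
    fun s hs t ht => l2_mul_integrable (hW2 s hs) (hW2 t ht)
  -- mean of W
  have hEW : ∀ t ∈ Finset.Icc 1 M, (∫ ω, A t ω * Y t ω ∂μ) = μA * μY := by
    intro t ht
    have h := (hsingle t ht).integral_fun_mul_eq_mul_integral
      (hA t ht).aestronglyMeasurable (hY t ht).aestronglyMeasurable
    rw [hmA t ht, hmY t ht] at h
    exact h
  -- second moment of W pairs
  have hEWW : ∀ s ∈ Finset.Icc 1 M, ∀ t ∈ Finset.Icc 1 M,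
      (∫ ω, (A s ω * Y s ω) * (A t ω * Y t ω) ∂μ)
        = (cA (Nat.dist s t) + μA * μA) * (cY (Nat.dist s t) + μY * μY) := by
    intro s hs t ht
    have hre : ∀ ω : Ω, (A s ω * Y s ω) * (A t ω * Y t ω)
        = (A s ω * A t ω) * (Y s ω * Y t ω) := fun ω => by ring
    simp_rw [hre]
    have hA' : (∫ ω, A s ω * A t ω ∂μ) = cA (Nat.dist s t) + μA * μA := by
      have := hstatA s hs t ht
      rw [hmA s hs, hmA t ht] at this
      linarith
    have hY' : (∫ ω, Y s ω * Y t ω ∂μ) = cY (Nat.dist s t) + μY * μY := by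
      have := hstatY s hs t ht
      rw [hmY s hs, hmY t ht] at this
      linarith
    have h := (hpair s hs t ht).integral_fun_mul_eq_mul_integral (hAmul s hs t ht).aestronglyMeasurable (hYmul s hs t ht).aestronglyMeasurable
    rw [hA', hY'] at h
    exact h
  -- cA vanishes off the diagonal
  have hcA : ∀ s ∈ Finset.Icc 1 M, ∀ t ∈ Finset.Icc 1 M,
      cA (Nat.dist s t) = if s = t then cA 0 else 0 := by
    intro s hs t ht
    simp only [Finset.mem_Icc] at hs ht
    by_cases h : s = t
    · simp [h, Nat.dist_self]
    · rw [if_neg h]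
      refine hcA0 _ ?_ ?_ <;> simp only [Nat.dist] <;> omega
  -- diagonal double sums
  have hdiag : ∀ c : ℕ → ℝ,
      (∑ s ∈ Finset.Icc 1 M, ∑ t ∈ Finset.Icc 1 M,
        cA (Nat.dist s t) * c (Nat.dist s t)) = M * (cA 0 * c 0) := by
    intro c
    calc (∑ s ∈ Finset.Icc 1 M, ∑ t ∈ Finset.Icc 1 M,
          cA (Nat.dist s t) * c (Nat.dist s t))
        = ∑ s ∈ Finset.Icc 1 M, ∑ t ∈ Finset.Icc 1 M,
            (if s = t then cA 0 * c 0 else 0) := by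
          refine Finset.sum_congr rfl fun s hs => Finset.sum_congr rfl fun t ht => ?_
          rcases eq_or_ne s t with h | h
          · simp [h, Nat.dist_self]
          · rw [if_neg h, hcA s hs t ht, if_neg h, zero_mul]
      _ = ∑ s ∈ Finset.Icc 1 M, (cA 0 * c 0) := by
          refine Finset.sum_congr rfl fun s hs => ?_
          rw [Finset.sum_ite_eq (Finset.Icc 1 M) s (fun _ => cA 0 * c 0), if_pos hs]
      _ = M * (cA 0 * c 0) := by
          rw [Finset.sum_const, Nat.card_Icc]
          simp
  have hdiag1 : (∑ s ∈ Finset.Icc 1 M, ∑ t ∈ Finset.Icc 1 M, cA (Nat.dist s t))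
      = M * cA 0 := by
    have := hdiag (fun _ => 1)
    simpa using this
  -- variance of Y block average
  have hVY : variance (fun ω => (M : ℝ)⁻¹ * ∑ t ∈ Finset.Icc 1 M, Y t ω) μ
      = (M : ℝ)⁻¹ ^ 2 * ∑ s ∈ Finset.Icc 1 M, ∑ t ∈ Finset.Icc 1 M, cY (Nat.dist s t) := by
    rw [var_avg_sum μ M Y hY hYmul]
    congr 1
    exact Finset.sum_congr rfl fun s hs => Finset.sum_congr rfl fun t ht => hstatY s hs t ht
  -- variance of A block average
  have hVA : variance (fun ω => (M : ℝ)⁻¹ * ∑ t ∈ Finset.Icc 1 M, A t ω) μ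
      = (M : ℝ)⁻¹ ^ 2 * (M * cA 0) := by
    rw [var_avg_sum μ M A hA hAmul, ← hdiag1]
    congr 1
    exact Finset.sum_congr rfl fun s hs => Finset.sum_congr rfl fun t ht => hstatA s hs t ht
  -- variance of W block average
  have hVW : variance (fun ω => (M : ℝ)⁻¹ * ∑ t ∈ Finset.Icc 1 M, A t ω * Y t ω) μ
      = (M : ℝ)⁻¹ ^ 2 * ((M : ℝ) * (cA 0 * cY 0)
          + μA ^ 2 * (∑ s ∈ Finset.Icc 1 M, ∑ t ∈ Finset.Icc 1 M, cY (Nat.dist s t))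
          + μY ^ 2 * ((M : ℝ) * cA 0)) := by
    have h := var_avg_sum μ M (fun t ω => A t ω * Y t ω) hW2 hWmul
    rw [h]
    congr 1
    have hterm : ∀ s ∈ Finset.Icc 1 M, ∀ t ∈ Finset.Icc 1 M,
        ((∫ ω, (A s ω * Y s ω) * (A t ω * Y t ω) ∂μ)
          - (∫ ω, A s ω * Y s ω ∂μ) * (∫ ω, A t ω * Y t ω ∂μ))
        = cA (Nat.dist s t) * cY (Nat.dist s t)
            + μA ^ 2 * cY (Nat.dist s t) + μY ^ 2 * cA (Nat.dist s t) := by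
      intro s hs t ht
      rw [hEWW s hs t ht, hEW s hs, hEW t ht]
      ring
    calc (∑ s ∈ Finset.Icc 1 M, ∑ t ∈ Finset.Icc 1 M,
          ((∫ ω, (A s ω * Y s ω) * (A t ω * Y t ω) ∂μ)
            - (∫ ω, A s ω * Y s ω ∂μ) * (∫ ω, A t ω * Y t ω ∂μ)))
        = ∑ s ∈ Finset.Icc 1 M, ∑ t ∈ Finset.Icc 1 M,
            (cA (Nat.dist s t) * cY (Nat.dist s t)
              + μA ^ 2 * cY (Nat.dist s t) + μY ^ 2 * cA (Nat.dist s t)) := by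
          exact Finset.sum_congr rfl fun s hs => Finset.sum_congr rfl fun t ht =>
            hterm s hs t ht
      _ = (∑ s ∈ Finset.Icc 1 M, ∑ t ∈ Finset.Icc 1 M,
            cA (Nat.dist s t) * cY (Nat.dist s t))
          + μA ^ 2 * (∑ s ∈ Finset.Icc 1 M, ∑ t ∈ Finset.Icc 1 M, cY (Nat.dist s t))
          + μY ^ 2 * (∑ s ∈ Finset.Icc 1 M, ∑ t ∈ Finset.Icc 1 M, cA (Nat.dist s t)) := by
          simp only [Finset.sum_add_distrib, Finset.mul_sum]
      _ = (M : ℝ) * (cA 0 * cY 0)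
          + μA ^ 2 * (∑ s ∈ Finset.Icc 1 M, ∑ t ∈ Finset.Icc 1 M, cY (Nat.dist s t))
          + μY ^ 2 * ((M : ℝ) * cA 0) := by
          rw [hdiag cY, hdiag1]
  rw [hVY, hVA, hVW]
  field_simp
  ring
end

section
/- Let U₁, U₂, V₁, V₂ be {0,1}-valued random variables such that the pair (U₁, U₂) is independent of the pair (V₁, V₂), with E[U₁] = E[U₂] = μ_U, E[V₁] = E[V₂] = μ_V, Cov(U₁, U₂) = c_U and Cov(V₁, V₂) = c_V. Define W_i = U_i + V_i − U_i·V_i for i = 1, 2 (the logical OR of U_i and V_i). Then Cov(W₁, W₂) = c_U·c_V + c_U·(1 − μ_V)² + c_V·(1 − μ_U)². (This is the paper's two-node formula: the busy-period indicator observed at the egress of a two-node path is the OR of the individual nodes' busy indicators, and its autocovariance satisfies c_{W₂}(τ) = c_{Y₁}(τ)c_{Y₂}(τ) + c_{Y₁}(τ)(1−μ_{Y₂})² + c_{Y₂}(τ)(1−μ_{Y₁})².) -/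
open MeasureTheory ProbabilityTheory

/-- Two-node busy-period formula: for `{0,1}`-valued `U₁, U₂, V₁, V₂` with
`(U₁, U₂)` independent of `(V₁, V₂)`, means `μ_U`, `μ_V`, covariances `c_U`, `c_V`,
the logical OR `W_i = U_i + V_i − U_i V_i` satisfies
`Cov(W₁, W₂) = c_U c_V + c_U (1 − μ_V)² + c_V (1 − μ_U)²`. -/
theorem two_node_or_covariance
    {Ω : Type*} [MeasurableSpace Ω] (μ : Measure Ω) [IsProbabilityMeasure μ]
    (U₁ U₂ V₁ V₂ : Ω → ℝ)
    (hU₁ : ∀ ω, U₁ ω = 0 ∨ U₁ ω = 1) (hU₂ : ∀ ω, U₂ ω = 0 ∨ U₂ ω = 1)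
    (hV₁ : ∀ ω, V₁ ω = 0 ∨ V₁ ω = 1) (hV₂ : ∀ ω, V₂ ω = 0 ∨ V₂ ω = 1)
    (hU₁m : MemLp U₁ 2 μ) (hU₂m : MemLp U₂ 2 μ)
    (hV₁m : MemLp V₁ 2 μ) (hV₂m : MemLp V₂ 2 μ)
    (hindep : IndepFun (fun ω => (U₁ ω, U₂ ω)) (fun ω => (V₁ ω, V₂ ω)) μ)
    (μU μV cU cV : ℝ)
    (hmU₁ : ∫ ω, U₁ ω ∂μ = μU) (hmU₂ : ∫ ω, U₂ ω ∂μ = μU)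
    (hmV₁ : ∫ ω, V₁ ω ∂μ = μV) (hmV₂ : ∫ ω, V₂ ω ∂μ = μV)
    (hcU : (∫ ω, U₁ ω * U₂ ω ∂μ) - (∫ ω, U₁ ω ∂μ) * (∫ ω, U₂ ω ∂μ) = cU)
    (hcV : (∫ ω, V₁ ω * V₂ ω ∂μ) - (∫ ω, V₁ ω ∂μ) * (∫ ω, V₂ ω ∂μ) = cV)
    (W₁ W₂ : Ω → ℝ)
    (hW₁ : ∀ ω, W₁ ω = U₁ ω + V₁ ω - U₁ ω * V₁ ω)
    (hW₂ : ∀ ω, W₂ ω = U₂ ω + V₂ ω - U₂ ω * V₂ ω) :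
    (∫ ω, W₁ ω * W₂ ω ∂μ) - (∫ ω, W₁ ω ∂μ) * (∫ ω, W₂ ω ∂μ)
      = cU * cV + cU * (1 - μV) ^ 2 + cV * (1 - μU) ^ 2 := by
  -- binary-valuedness of products
  have hprod01 : ∀ f g : Ω → ℝ, (∀ ω, f ω = 0 ∨ f ω = 1) → (∀ ω, g ω = 0 ∨ g ω = 1) →
      ∀ ω, f ω * g ω = 0 ∨ f ω * g ω = 1 := by
    intro f g hf hg ω
    rcases hf ω with h | h <;> rcases hg ω with h' | h' <;> simp [h, h']
  -- integrability of bounded binary functions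
  have hintb : ∀ f : Ω → ℝ, AEStronglyMeasurable f μ → (∀ ω, f ω = 0 ∨ f ω = 1) →
      Integrable f μ := by
    intro f hm hf
    refine memLp_one_iff_integrable.mp
      (MemLp.of_bound hm 1 (Filter.Eventually.of_forall fun ω => ?_))
    rcases hf ω with h | h <;> simp [h]
  have aU₁ := hU₁m.aestronglyMeasurable
  have aU₂ := hU₂m.aestronglyMeasurable
  have aV₁ := hV₁m.aestronglyMeasurable
  have aV₂ := hV₂m.aestronglyMeasurable
  have iU₁ := hintb _ aU₁ hU₁
  have iU₂ := hintb _ aU₂ hU₂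
  have iV₁ := hintb _ aV₁ hV₁
  have iV₂ := hintb _ aV₂ hV₂
  have hUU := hprod01 _ _ hU₁ hU₂
  have hVV := hprod01 _ _ hV₁ hV₂
  have iUU : Integrable (fun ω => U₁ ω * U₂ ω) μ := hintb _ (aU₁.mul aU₂) hUU
  have iVV : Integrable (fun ω => V₁ ω * V₂ ω) μ := hintb _ (aV₁.mul aV₂) hVV
  have iU₁V₁ : Integrable (fun ω => U₁ ω * V₁ ω) μ :=
    hintb _ (aU₁.mul aV₁) (hprod01 _ _ hU₁ hV₁)
  have iU₂V₂ : Integrable (fun ω => U₂ ω * V₂ ω) μ :=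
    hintb _ (aU₂.mul aV₂) (hprod01 _ _ hU₂ hV₂)
  have iU₁V₂ : Integrable (fun ω => U₁ ω * V₂ ω) μ :=
    hintb _ (aU₁.mul aV₂) (hprod01 _ _ hU₁ hV₂)
  have iU₂V₁ : Integrable (fun ω => U₂ ω * V₁ ω) μ :=
    hintb _ (aU₂.mul aV₁) (hprod01 _ _ hU₂ hV₁)
  have iUUV₁ : Integrable (fun ω => U₁ ω * U₂ ω * V₁ ω) μ :=
    hintb _ ((aU₁.mul aU₂).mul aV₁) (hprod01 _ _ hUU hV₁)
  have iUUV₂ : Integrable (fun ω => U₁ ω * U₂ ω * V₂ ω) μ :=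
    hintb _ ((aU₁.mul aU₂).mul aV₂) (hprod01 _ _ hUU hV₂)
  have iU₁VV : Integrable (fun ω => U₁ ω * (V₁ ω * V₂ ω)) μ :=
    hintb _ (aU₁.mul (aV₁.mul aV₂)) (hprod01 _ _ hU₁ hVV)
  have iU₂VV : Integrable (fun ω => U₂ ω * (V₁ ω * V₂ ω)) μ :=
    hintb _ (aU₂.mul (aV₁.mul aV₂)) (hprod01 _ _ hU₂ hVV)
  have iUUVV : Integrable (fun ω => U₁ ω * U₂ ω * (V₁ ω * V₂ ω)) μ :=
    hintb _ ((aU₁.mul aU₂).mul (aV₁.mul aV₂)) (hprod01 _ _ hUU hVV)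
  -- independence of the relevant compositions
  have h11 : IndepFun U₁ V₁ μ := hindep.comp measurable_fst measurable_fst
  have h12 : IndepFun U₁ V₂ μ := hindep.comp measurable_fst measurable_snd
  have h21 : IndepFun U₂ V₁ μ := hindep.comp measurable_snd measurable_fst
  have h22 : IndepFun U₂ V₂ μ := hindep.comp measurable_snd measurable_snd
  have hUUV1 : IndepFun (fun ω => U₁ ω * U₂ ω) V₁ μ :=
    hindep.comp (measurable_fst.mul measurable_snd) measurable_fst
  have hUUV2 : IndepFun (fun ω => U₁ ω * U₂ ω) V₂ μ :=
    hindep.comp (measurable_fst.mul measurable_snd) measurable_snd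
  have hU1VV : IndepFun U₁ (fun ω => V₁ ω * V₂ ω) μ :=
    hindep.comp measurable_fst (measurable_fst.mul measurable_snd)
  have hU2VV : IndepFun U₂ (fun ω => V₁ ω * V₂ ω) μ :=
    hindep.comp measurable_snd (measurable_fst.mul measurable_snd)
  have hUUVV : IndepFun (fun ω => U₁ ω * U₂ ω) (fun ω => V₁ ω * V₂ ω) μ :=
    hindep.comp (measurable_fst.mul measurable_snd) (measurable_fst.mul measurable_snd)
  -- second moments
  set PU := ∫ ω, U₁ ω * U₂ ω ∂μ with hPUdef
  set PV := ∫ ω, V₁ ω * V₂ ω ∂μ with hPVdef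
  have hPU : PU = cU + μU * μU := by rw [← hcU, hmU₁, hmU₂]; ring
  have hPV : PV = cV + μV * μV := by rw [← hcV, hmV₁, hmV₂]; ring
  -- product integrals via independence
  have e11 : ∫ ω, U₁ ω * V₁ ω ∂μ = μU * μV := by
    have := h11.integral_fun_mul_eq_mul_integral iU₁.aestronglyMeasurable iV₁.aestronglyMeasurable
    simpa [Pi.mul_apply, hmU₁, hmV₁] using this
  have e12 : ∫ ω, U₁ ω * V₂ ω ∂μ = μU * μV := by
    have := h12.integral_fun_mul_eq_mul_integral iU₁.aestronglyMeasurable iV₂.aestronglyMeasurable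
    simpa [Pi.mul_apply, hmU₁, hmV₂] using this
  have e21 : ∫ ω, U₂ ω * V₁ ω ∂μ = μU * μV := by
    have := h21.integral_fun_mul_eq_mul_integral iU₂.aestronglyMeasurable iV₁.aestronglyMeasurable
    simpa [Pi.mul_apply, hmU₂, hmV₁] using this
  have e22 : ∫ ω, U₂ ω * V₂ ω ∂μ = μU * μV := by
    have := h22.integral_fun_mul_eq_mul_integral iU₂.aestronglyMeasurable iV₂.aestronglyMeasurable
    simpa [Pi.mul_apply, hmU₂, hmV₂] using this
  have eUUV1 : ∫ ω, U₁ ω * U₂ ω * V₁ ω ∂μ = PU * μV := by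
    have := hUUV1.integral_fun_mul_eq_mul_integral iUU.aestronglyMeasurable iV₁.aestronglyMeasurable
    simpa [Pi.mul_apply, hmV₁] using this
  have eUUV2 : ∫ ω, U₁ ω * U₂ ω * V₂ ω ∂μ = PU * μV := by
    have := hUUV2.integral_fun_mul_eq_mul_integral iUU.aestronglyMeasurable iV₂.aestronglyMeasurable
    simpa [Pi.mul_apply, hmV₂] using this
  have eU1VV : ∫ ω, U₁ ω * (V₁ ω * V₂ ω) ∂μ = μU * PV := by
    have := hU1VV.integral_fun_mul_eq_mul_integral iU₁.aestronglyMeasurable iVV.aestronglyMeasurable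
    simpa [Pi.mul_apply, hmU₁] using this
  have eU2VV : ∫ ω, U₂ ω * (V₁ ω * V₂ ω) ∂μ = μU * PV := by
    have := hU2VV.integral_fun_mul_eq_mul_integral iU₂.aestronglyMeasurable iVV.aestronglyMeasurable
    simpa [Pi.mul_apply, hmU₂] using this
  have eUUVV : ∫ ω, U₁ ω * U₂ ω * (V₁ ω * V₂ ω) ∂μ = PU * PV := by
    have := hUUVV.integral_fun_mul_eq_mul_integral iUU.aestronglyMeasurable iVV.aestronglyMeasurable
    simpa [Pi.mul_apply] using this
  -- means of W₁, W₂
  have iadd₁ : Integrable (fun ω => U₁ ω + V₁ ω) μ := iU₁.add iV₁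
  have iadd₂ : Integrable (fun ω => U₂ ω + V₂ ω) μ := iU₂.add iV₂
  have hEW1 : ∫ ω, W₁ ω ∂μ = μU + μV - μU * μV := by
    have h : ∫ ω, W₁ ω ∂μ = ∫ ω, (U₁ ω + V₁ ω - U₁ ω * V₁ ω) ∂μ := by
      exact integral_congr_ae (Filter.Eventually.of_forall hW₁)
    rw [h, integral_sub iadd₁ iU₁V₁, integral_add iU₁ iV₁, hmU₁, hmV₁, e11]
  have hEW2 : ∫ ω, W₂ ω ∂μ = μU + μV - μU * μV := by
    have h : ∫ ω, W₂ ω ∂μ = ∫ ω, (U₂ ω + V₂ ω - U₂ ω * V₂ ω) ∂μ := by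
      exact integral_congr_ae (Filter.Eventually.of_forall hW₂)
    rw [h, integral_sub iadd₂ iU₂V₂, integral_add iU₂ iV₂, hmU₂, hmV₂, e22]
  -- expansion of W₁ * W₂
  have hEWW : ∫ ω, W₁ ω * W₂ ω ∂μ
      = PU + PV + 2 * (μU * μV) - 2 * (PU * μV) - 2 * (μU * PV) + PU * PV := by
    have h : ∫ ω, W₁ ω * W₂ ω ∂μ =
        ∫ ω, (U₁ ω * U₂ ω + U₁ ω * V₂ ω + U₂ ω * V₁ ω + V₁ ω * V₂ ω
          - U₁ ω * U₂ ω * V₂ ω - U₁ ω * U₂ ω * V₁ ω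
          - U₁ ω * (V₁ ω * V₂ ω) - U₂ ω * (V₁ ω * V₂ ω)
          + U₁ ω * U₂ ω * (V₁ ω * V₂ ω)) ∂μ := by
      refine integral_congr_ae (Filter.Eventually.of_forall fun ω => ?_)
      show W₁ ω * W₂ ω = _
      rw [hW₁, hW₂]; ring
    have iA1 : Integrable (fun ω => U₁ ω * U₂ ω + U₁ ω * V₂ ω) μ := iUU.add iU₁V₂
    have iA2 : Integrable (fun ω => U₁ ω * U₂ ω + U₁ ω * V₂ ω + U₂ ω * V₁ ω) μ := iA1.add iU₂V₁
    have iA3 : Integrable (fun ω => U₁ ω * U₂ ω + U₁ ω * V₂ ω + U₂ ω * V₁ ω + V₁ ω * V₂ ω) μ := iA2.add iVV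
    have iA4 : Integrable (fun ω => U₁ ω * U₂ ω + U₁ ω * V₂ ω + U₂ ω * V₁ ω + V₁ ω * V₂ ω - U₁ ω * U₂ ω * V₂ ω) μ := iA3.sub iUUV₂
    have iA5 : Integrable (fun ω => U₁ ω * U₂ ω + U₁ ω * V₂ ω + U₂ ω * V₁ ω + V₁ ω * V₂ ω - U₁ ω * U₂ ω * V₂ ω - U₁ ω * U₂ ω * V₁ ω) μ := iA4.sub iUUV₁
    have iA6 : Integrable (fun ω => U₁ ω * U₂ ω + U₁ ω * V₂ ω + U₂ ω * V₁ ω + V₁ ω * V₂ ω - U₁ ω * U₂ ω * V₂ ω - U₁ ω * U₂ ω * V₁ ω - U₁ ω * (V₁ ω * V₂ ω)) μ := iA5.sub iU₁VV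
    have iA7 : Integrable (fun ω => U₁ ω * U₂ ω + U₁ ω * V₂ ω + U₂ ω * V₁ ω + V₁ ω * V₂ ω - U₁ ω * U₂ ω * V₂ ω - U₁ ω * U₂ ω * V₁ ω - U₁ ω * (V₁ ω * V₂ ω) - U₂ ω * (V₁ ω * V₂ ω)) μ := iA6.sub iU₂VV
    rw [h]
    rw [integral_add iA7 iUUVV, integral_sub iA6 iU₂VV, integral_sub iA5 iU₁VV,
      integral_sub iA4 iUUV₁, integral_sub iA3 iUUV₂, integral_add iA2 iVV,
      integral_add iA1 iU₂V₁, integral_add iUU iU₁V₂]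
    rw [e12, e21, eUUV2, eUUV1, eU1VV, eU2VV, eUUVV]
    ring
  rw [hEWW, hEW1, hEW2, hPU, hPV]
  ring
end

section
/- Let H ∈ (1/2, 1), σ² > 0, and μ_U, μ_V ∈ [0, 1]. Let c_U, c_V : ℕ → ℝ be sequences (autocovariances of two independent stationary busy-period processes) such that c_U(τ)·τ^{2−2H} → σ² and c_V(τ)·τ^{2−2H} → 0 as τ → ∞, and define c_W(τ) = c_U(τ)·c_V(τ) + c_U(τ)·(1 − μ_V)² + c_V(τ)·(1 − μ_U)². Then c_W(τ)·τ^{2−2H} → σ²·(1 − μ_V)² as τ → ∞. In particular, for cross traffic streams characterized by different Hurst parameters, the component with the largest Hurst parameter dominates the covariance of the end-to-end observation: c_W(τ) ∼ (1 − μ_V)²·σ²·τ^{2H−2}. -/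
open Filter Topology Real

/-- Dominance of the largest Hurst parameter: if `c_U(τ) τ^{2−2H} → σ²` and
`c_V(τ) τ^{2−2H} → 0` as `τ → ∞`, then the end-to-end covariance
`c_W(τ) = c_U c_V + c_U (1−μ_V)² + c_V (1−μ_U)²` satisfies
`c_W(τ) τ^{2−2H} → σ² (1−μ_V)²`, i.e. `c_W(τ) ∼ (1−μ_V)² σ² τ^{2H−2}`. -/
theorem largest_hurst_dominates
    (H : ℝ) (hH : H ∈ Set.Ioo (1 / 2 : ℝ) 1)
    (σsq : ℝ) (hσ : 0 < σsq)
    (μU μV : ℝ) (hμU : μU ∈ Set.Icc (0 : ℝ) 1) (hμV : μV ∈ Set.Icc (0 : ℝ) 1)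
    (cU cV cW : ℕ → ℝ)
    (hU : Tendsto (fun τ : ℕ => cU τ * (τ : ℝ) ^ (2 - 2 * H)) atTop (𝓝 σsq))
    (hV : Tendsto (fun τ : ℕ => cV τ * (τ : ℝ) ^ (2 - 2 * H)) atTop (𝓝 0))
    (hW : ∀ τ, cW τ = cU τ * cV τ + cU τ * (1 - μV) ^ 2 + cV τ * (1 - μU) ^ 2) :
    Tendsto (fun τ : ℕ => cW τ * (τ : ℝ) ^ (2 - 2 * H)) atTop
      (𝓝 (σsq * (1 - μV) ^ 2)) := by
  -- τ^(2H-2) → 0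
  have hexp : 2 * H - 2 < 0 := by linarith [hH.2]
  have hpow : Tendsto (fun τ : ℕ => (τ : ℝ) ^ (2 * H - 2)) atTop (𝓝 0) := by
    have := (tendsto_rpow_neg_atTop (by linarith : (0:ℝ) < -(2 * H - 2))).comp
      tendsto_natCast_atTop_atTop (α := ℕ)
    simpa [Function.comp_def, Real.rpow_neg_one, rpow_neg] using this
  -- cV → 0
  have hcV : Tendsto cV atTop (𝓝 0) := by
    have h1 : Tendsto (fun τ : ℕ => (cV τ * (τ : ℝ) ^ (2 - 2 * H)) * (τ : ℝ) ^ (2 * H - 2))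
        atTop (𝓝 (0 * 0)) := hV.mul hpow
    rw [mul_zero] at h1
    refine h1.congr' ?_
    filter_upwards [eventually_ge_atTop 1] with τ hτ
    have hτ0 : (0:ℝ) < (τ : ℝ) := by exact_mod_cast hτ
    rw [mul_assoc, ← Real.rpow_add hτ0]
    norm_num
  have key : Tendsto (fun τ : ℕ =>
      (cU τ * (τ : ℝ) ^ (2 - 2 * H)) * cV τ
      + (cU τ * (τ : ℝ) ^ (2 - 2 * H)) * (1 - μV) ^ 2
      + (cV τ * (τ : ℝ) ^ (2 - 2 * H)) * (1 - μU) ^ 2) atTop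
      (𝓝 (σsq * 0 + σsq * (1 - μV) ^ 2 + 0 * (1 - μU) ^ 2)) :=
    ((hU.mul hcV).add (hU.mul_const _)).add (hV.mul_const _)
  have : σsq * 0 + σsq * (1 - μV) ^ 2 + 0 * (1 - μU) ^ 2 = σsq * (1 - μV) ^ 2 := by ring
  rw [this] at key
  refine key.congr (fun τ => ?_)
  rw [hW τ]; ring
end
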